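/- If man m pushes up a set X of women ranked below his DA partner μ(m) and incurs regret (i.e., μ(m) >_m μ^X(m) where μ^X is the new DA matching), then m's new partner belongs to X. -/

import Mathlib

/-- A stable marriage profile: `M m` is man `m`'s ranking of women
(`M m k` = his `k`-th favorite woman), `W w` is woman `w`'s ranking of men. -/
structure Profile (n : ℕ) where
  M : Fin n → (Fin n ≃ Fin n)
  W : Fin n → (Fin n ≃ Fin n)

/-- Man `m` strictly prefers woman `w₁` to woman `w₂`. -/
def Profile.mpref {n : ℕ} (P : Profile n) (m w₁ w₂ : Fin n) : Prop :=
  (P.M m).symm w₁ < (P.M m).symm w₂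

/-- Woman `w` strictly prefers man `m₁` to man `m₂`. -/
def Profile.wpref {n : ℕ} (P : Profile n) (w m₁ m₂ : Fin n) : Prop :=
  (P.W w).symm m₁ < (P.W w).symm m₂

/-- State of the Gale–Shapley (deferred acceptance) algorithm:
`next m` is the rank of the next woman `m` will propose to, `wmatch w` is the man
currently (tentatively) held by woman `w`, `props` records all proposals made so far. -/
structure GSState (n : ℕ) where
  next : Fin n → ℕ
  wmatch : Fin n → Option (Fin n)
  props : List (Fin n × Fin n)

/-- Man `m` is currently not held by any woman. -/
def isUnmatched {n : ℕ} (s : GSState n) (m : Fin n) : Bool :=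
  decide (∀ w, s.wmatch w ≠ some m)

/-- One step of men-proposing deferred acceptance: the first unmatched man
proposes to the next woman on his list; she keeps her favorite proposer so far. -/
def GSstep {n : ℕ} (P : Profile n) (s : GSState n) : GSState n :=
  match (List.finRange n).find? (fun m => isUnmatched s m && decide (s.next m < n)) with
  | none => s
  | some m =>
    if h : s.next m < n then
      let w := P.M m ⟨s.next m, h⟩
      let s' : GSState n :=
        { next := Function.update s.next m (s.next m + 1),
          wmatch := s.wmatch,
          props := (m, w) :: s.props }
      match s.wmatch w with
      | none => { s' with wmatch := Function.update s.wmatch w (some m) }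
      | some m' =>
          if (P.W w).symm m < (P.W w).symm m' then
            { s' with wmatch := Function.update s.wmatch w (some m) }
          else s'
    else s

def GSinit (n : ℕ) : GSState n := ⟨fun _ => 0, fun _ => none, []⟩

/-- Run deferred acceptance to completion (at most `n*n` proposals occur). -/
def GSrun {n : ℕ} (P : Profile n) : GSState n := (GSstep P)^[n * n + 1] (GSinit n)

/-- The men-proposing deferred acceptance matching, as a map from men to women. -/
noncomputable def DA {n : ℕ} (P : Profile n) : Fin n → Fin n :=
  fun m => if h : ∃ w, (GSrun P).wmatch w = some m then h.choose else m

/-- Man `m` proposes to woman `w` during the run of deferred acceptance on `P`. -/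
def Proposes {n : ℕ} (P : Profile n) (m w : Fin n) : Prop :=
  (m, w) ∈ (GSrun P).props

/-- `(m, w)` is a blocking pair for the matching `μ` (men to women) w.r.t. profile `P`. -/
def Blocks {n : ℕ} (P : Profile n) (μ : Fin n → Fin n) (m w : Fin n) : Prop :=
  P.mpref m w (μ m) ∧ ∃ m', μ m' = w ∧ P.wpref w m m'

/-- `μ` is a stable matching with respect to profile `P`. -/
def Stable {n : ℕ} (P : Profile n) (μ : Fin n → Fin n) : Prop :=
  Function.Bijective μ ∧ ∀ m w, ¬ Blocks P μ m w

/-- Replace man `m`'s preference list by `e`. -/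
def Profile.updateM {n : ℕ} (P : Profile n) (m : Fin n) (e : Fin n ≃ Fin n) : Profile n :=
  { P with M := Function.update P.M m e }

/-- Replace woman `w`'s preference list by `e`. -/
def Profile.updateW {n : ℕ} (P : Profile n) (w : Fin n) (e : Fin n ≃ Fin n) : Profile n :=
  { P with W := Function.update P.W w e }

/-- The set of women ranked strictly above `w₀` in the list `e`. -/
def Above {n : ℕ} (e : Fin n ≃ Fin n) (w₀ : Fin n) : Set (Fin n) :=
  {w | e.symm w < e.symm w₀}

/-- The set of women ranked strictly below `w₀` in the list `e`. -/
def Below {n : ℕ} (e : Fin n ≃ Fin n) (w₀ : Fin n) : Set (Fin n) :=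
  {w | e.symm w₀ < e.symm w}

/-- `e'` is obtained from man `m`'s true list by pushing up the set `X` and pushing
down the set `Y` around the pivot `DA P m` (the order of women above and below
the pivot is immaterial, cf. Proposition 2 of the paper). -/
def PushUpDown {n : ℕ} (P : Profile n) (m : Fin n) (X Y : Set (Fin n))
    (e' : Fin n ≃ Fin n) : Prop :=
  Above e' (DA P m) = (Above (P.M m) (DA P m) ∪ X) \ Y

/-- `e'` is obtained from `m`'s true list by pushing up the set `X` above `DA P m`. -/
def PushUp {n : ℕ} (P : Profile n) (m : Fin n) (X : Set (Fin n))
    (e' : Fin n ≃ Fin n) : Prop :=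
  PushUpDown P m X ∅ e'

/-- `e'` is obtained from `m`'s true list by pushing down the set `Y` below `DA P m`. -/
def PushDown {n : ℕ} (P : Profile n) (m : Fin n) (Y : Set (Fin n))
    (e' : Fin n ≃ Fin n) : Prop :=
  PushUpDown P m ∅ Y e'

/-- Woman `w` is ranked below `DA P m` in `m`'s true list, and pushing her up
individually leaves `m`'s deferred acceptance partner unchanged (no regret). -/
def NoRegretWoman {n : ℕ} (P : Profile n) (m w : Fin n) : Prop :=
  w ∈ Below (P.M m) (DA P m) ∧
    ∀ e' : Fin n ≃ Fin n, PushUp P m {w} e' → DA (P.updateM m e') m = DA P m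

/-- The no-regret set `W^NR` of accomplice `m`. -/
def WNR {n : ℕ} (P : Profile n) (m : Fin n) : Set (Fin n) :=
  {w | NoRegretWoman P m w}

namespace GSDev

variable {n : ℕ} (Q : Profile n)

lemma isUnmatched_iff (s : GSState n) (p : Fin n) :
    isUnmatched s p = true ↔ ∀ w, s.wmatch w ≠ some p := by
  simp [isUnmatched]

/-- characterization of one step -/
lemma step_char (s : GSState n) :
    ((∀ p : Fin n, ¬(isUnmatched s p = true ∧ s.next p < n)) ∧ GSstep Q s = s) ∨
    ∃ (p : Fin n) (h : s.next p < n), isUnmatched s p = true ∧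
      (GSstep Q s).next = Function.update s.next p (s.next p + 1) ∧
      ((GSstep Q s).wmatch = Function.update s.wmatch (Q.M p ⟨s.next p, h⟩) (some p)
          ∧ (∀ hold, s.wmatch (Q.M p ⟨s.next p, h⟩) = some hold →
              Q.wpref (Q.M p ⟨s.next p, h⟩) p hold)
        ∨ (GSstep Q s).wmatch = s.wmatch
          ∧ ∃ hold, s.wmatch (Q.M p ⟨s.next p, h⟩) = some hold ∧
              ¬ Q.wpref (Q.M p ⟨s.next p, h⟩) p hold) := by
  rcases hfind : (List.finRange n).find? (fun m => isUnmatched s m && decide (s.next m < n))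
      with _ | p
  · left
    constructor
    · intro p hp
      have := List.find?_eq_none.mp hfind p (List.mem_finRange p)
      simp [hp.1, hp.2] at this
    · unfold GSstep
      rw [hfind]
  · have hpred := List.find?_some hfind
    rw [Bool.and_eq_true, decide_eq_true_eq] at hpred
    obtain ⟨hun, hlt⟩ := hpred
    right
    have key : (GSstep Q s).next = Function.update s.next p (s.next p + 1) ∧
        ((GSstep Q s).wmatch = Function.update s.wmatch (Q.M p ⟨s.next p, hlt⟩) (some p)
            ∧ (∀ hold, s.wmatch (Q.M p ⟨s.next p, hlt⟩) = some hold →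
                Q.wpref (Q.M p ⟨s.next p, hlt⟩) p hold)
          ∨ (GSstep Q s).wmatch = s.wmatch
            ∧ ∃ hold, s.wmatch (Q.M p ⟨s.next p, hlt⟩) = some hold ∧
                ¬ Q.wpref (Q.M p ⟨s.next p, hlt⟩) p hold) := by
      unfold GSstep
      rw [hfind]
      try dsimp only
      rw [dif_pos hlt]
      try dsimp only
      rcases hw : s.wmatch (Q.M p ⟨s.next p, hlt⟩) with _ | m'
      · try dsimp only
        exact ⟨rfl, Or.inl ⟨rfl, by intro hold h2; cases h2⟩⟩
      · try dsimp only
        by_cases hc : (Q.W (Q.M p ⟨s.next p, hlt⟩)).symm p < (Q.W (Q.M p ⟨s.next p, hlt⟩)).symm m'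
        · rw [if_pos hc]
          exact ⟨rfl, Or.inl ⟨rfl, by intro hold h2; cases h2; exact hc⟩⟩
        · rw [if_neg hc]
          exact ⟨rfl, Or.inr ⟨rfl, m', rfl, hc⟩⟩
    exact ⟨p, hlt, hun, key.1, key.2⟩

structure Inv (s : GSState n) : Prop where
  bound : ∀ p, s.next p ≤ n
  inj : ∀ w w' p, s.wmatch w = some p → s.wmatch w' = some p → w = w'
  mrank : ∀ w p, s.wmatch w = some p → ((Q.M p).symm w : ℕ) < s.next p
  best : ∀ p w, ((Q.M p).symm w : ℕ) < s.next p →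
      ∃ h, s.wmatch w = some h ∧ (h = p ∨ Q.wpref w h p)

lemma inv_init : Inv Q (GSinit n) := by
  constructor
  · intro p; exact Nat.zero_le n
  · intro w w' p h; cases h
  · intro w p h; cases h
  · intro p w h; cases h

lemma inv_step (s : GSState n) (hs : Inv Q s) : Inv Q (GSstep Q s) := by
  rcases step_char Q s with ⟨_, heq⟩ | ⟨p, hlt, hun, hnext, hw⟩
  · rw [heq]; exact hs
  · have hunm : ∀ w', s.wmatch w' ≠ some p := (isUnmatched_iff s p).mp hun
    have hnp : (GSstep Q s).next p = s.next p + 1 := by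
      rw [hnext, Function.update_self]
    have hnq : ∀ q, q ≠ p → (GSstep Q s).next q = s.next q := by
      intro q hq; rw [hnext, Function.update_of_ne hq]
    have hnge : ∀ q, s.next q ≤ (GSstep Q s).next q := by
      intro q
      by_cases hq : q = p
      · subst hq; rw [hnp]; omega
      · rw [hnq q hq]
    have hb : ∀ q, (GSstep Q s).next q ≤ n := by
      intro q
      by_cases hq : q = p
      · subst hq; rw [hnp]; omega
      · rw [hnq q hq]; exact hs.bound q
    rcases hw with ⟨hwm, hacc⟩ | ⟨hwm, m', hm', hnacc⟩
    · -- accept case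
      have twm_at : (GSstep Q s).wmatch (Q.M p ⟨s.next p, hlt⟩) = some p := by
        rw [hwm, Function.update_self]
      have twm_off : ∀ w₂, w₂ ≠ Q.M p ⟨s.next p, hlt⟩ →
          (GSstep Q s).wmatch w₂ = s.wmatch w₂ := by
        intro w₂ h2; rw [hwm, Function.update_of_ne h2]
      refine ⟨hb, ?_, ?_, ?_⟩
      · intro w1 w2 q h1 h2
        by_cases e1 : w1 = Q.M p ⟨s.next p, hlt⟩ <;> by_cases e2 : w2 = Q.M p ⟨s.next p, hlt⟩
        · rw [e1, e2]
        · exfalso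
          rw [e1, twm_at] at h1
          rw [twm_off w2 e2] at h2
          cases h1
          exact hunm w2 h2
        · exfalso
          rw [e2, twm_at] at h2
          rw [twm_off w1 e1] at h1
          cases h2
          exact hunm w1 h1
        · exact hs.inj w1 w2 q (by rwa [twm_off w1 e1] at h1) (by rwa [twm_off w2 e2] at h2)
      · intro w2 q h2
        by_cases e2 : w2 = Q.M p ⟨s.next p, hlt⟩
        · subst e2
          rw [twm_at] at h2
          cases h2
          rw [hnp]
          simp
        · rw [twm_off w2 e2] at h2
          exact lt_of_lt_of_le (hs.mrank w2 q h2) (hnge q)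
      · intro q w2 hr
        by_cases hold : ((Q.M q).symm w2 : ℕ) < s.next q
        · obtain ⟨h0, hh0, hcomp⟩ := hs.best q w2 hold
          by_cases e2 : w2 = Q.M p ⟨s.next p, hlt⟩
          · subst e2
            have hpref : Q.wpref (Q.M p ⟨s.next p, hlt⟩) p h0 := hacc h0 hh0
            refine ⟨p, twm_at, Or.inr ?_⟩
            rcases hcomp with rfl | hcmp
            · exact hpref
            · exact lt_trans hpref hcmp
          · exact ⟨h0, by rwa [twm_off w2 e2], hcomp⟩
        · -- new proposal: q = p and w2 = w
          have hq : q = p := by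
            by_contra hq
            rw [hnq q hq] at hr
            exact hold hr
          subst hq
          rw [hnp] at hr
          have hval : ((Q.M q).symm w2 : ℕ) = s.next q := by omega
          have hw2 : w2 = Q.M q ⟨s.next q, hlt⟩ := by
            have : (Q.M q).symm w2 = ⟨s.next q, hlt⟩ := Fin.ext hval
            rw [← this, Equiv.apply_symm_apply]
          subst hw2
          exact ⟨q, twm_at, Or.inl rfl⟩
    · -- reject case
      refine ⟨hb, ?_, ?_, ?_⟩
      · intro w1 w2 q h1 h2
        rw [hwm] at h1 h2
        exact hs.inj w1 w2 q h1 h2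
      · intro w2 q h2
        rw [hwm] at h2
        exact lt_of_lt_of_le (hs.mrank w2 q h2) (hnge q)
      · intro q w2 hr
        by_cases hold : ((Q.M q).symm w2 : ℕ) < s.next q
        · obtain ⟨h0, hh0, hcomp⟩ := hs.best q w2 hold
          exact ⟨h0, by rwa [hwm], hcomp⟩
        · have hq : q = p := by
            by_contra hq
            rw [hnq q hq] at hr
            exact hold hr
          subst hq
          rw [hnp] at hr
          have hval : ((Q.M q).symm w2 : ℕ) = s.next q := by omega
          have hw2 : w2 = Q.M q ⟨s.next q, hlt⟩ := by
            have : (Q.M q).symm w2 = ⟨s.next q, hlt⟩ := Fin.ext hval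
            rw [← this, Equiv.apply_symm_apply]
          subst hw2
          refine ⟨m', by rwa [hwm], Or.inr ?_⟩
          have hne : m' ≠ q := fun he => hunm _ (he ▸ hm')
          have hle : (Q.W (Q.M q ⟨s.next q, hlt⟩)).symm m' ≤
              (Q.W (Q.M q ⟨s.next q, hlt⟩)).symm q := le_of_not_gt hnacc
          have : (Q.W (Q.M q ⟨s.next q, hlt⟩)).symm m' ≠
              (Q.W (Q.M q ⟨s.next q, hlt⟩)).symm q :=
            fun he => hne ((Q.W _).symm.injective he)
          exact lt_of_le_of_ne hle this

lemma inv_iter (k : ℕ) : Inv Q ((GSstep Q)^[k] (GSinit n)) := by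
  induction k with
  | zero => exact inv_init Q
  | succ k ih =>
    rw [Function.iterate_succ_apply']
    exact inv_step Q _ ih

lemma inv_run : Inv Q (GSrun Q) := inv_iter Q (n * n + 1)

lemma sum_step (s : GSState n) :
    GSstep Q s = s ∨ (∑ q, (GSstep Q s).next q) = (∑ q, s.next q) + 1 := by
  rcases step_char Q s with ⟨_, heq⟩ | ⟨p, hlt, hun, hnext, _⟩
  · left; exact heq
  · right
    rw [hnext]
    have h1 := Finset.add_sum_erase Finset.univ
      (Function.update s.next p (s.next p + 1)) (Finset.mem_univ p)
    have h2 := Finset.add_sum_erase Finset.univ s.next (Finset.mem_univ p)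
    have h3 : ∑ q ∈ Finset.univ.erase p, Function.update s.next p (s.next p + 1) q
        = ∑ q ∈ Finset.univ.erase p, s.next q :=
      Finset.sum_congr rfl (fun q hq => Function.update_of_ne (Finset.ne_of_mem_erase hq) _ _)
    rw [Function.update_self] at h1
    omega

lemma sum_le (s : GSState n) (hs : Inv Q s) : (∑ q, s.next q) ≤ n * n := by
  have := Finset.sum_le_card_nsmul Finset.univ s.next n (fun q _ => hs.bound q)
  simpa [Finset.card_univ, smul_eq_mul] using this

lemma run_fix : GSstep Q (GSrun Q) = GSrun Q := by
  have hex : ∃ j, j ≤ n * n ∧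
      GSstep Q ((GSstep Q)^[j] (GSinit n)) = (GSstep Q)^[j] (GSinit n) := by
    by_contra hno
    push_neg at hno
    have key : ∀ j, j ≤ n * n + 1 → j ≤ ∑ q, ((GSstep Q)^[j] (GSinit n)).next q := by
      intro j
      induction j with
      | zero => intro _; exact Nat.zero_le _
      | succ j ih =>
        intro hj
        rw [Function.iterate_succ_apply']
        rcases sum_step Q ((GSstep Q)^[j] (GSinit n)) with heq | hsum
        · exact absurd heq (hno j (by omega))
        · have := ih (by omega)
          omega
    have h1 := key (n * n + 1) (le_refl _)
    have h2 := sum_le Q _ (inv_iter Q (n * n + 1))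
    omega
  obtain ⟨j, hj, hfix⟩ := hex
  have hrun : GSrun Q = (GSstep Q)^[j] (GSinit n) := by
    show (GSstep Q)^[n * n + 1] (GSinit n) = _
    rw [show n * n + 1 = (n * n + 1 - j) + j by omega, Function.iterate_add_apply]
    exact Function.iterate_fixed hfix _
  rw [hrun]
  exact hfix

lemma run_no_active (p : Fin n) (hp : isUnmatched (GSrun Q) p = true) :
    (GSrun Q).next p = n := by
  rcases step_char Q (GSrun Q) with ⟨hall, _⟩ | ⟨q, hlt, hun, hnext, _⟩
  · have := hall p
    have hb := (inv_run Q).bound p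
    by_contra hne
    exact this ⟨hp, lt_of_le_of_ne hb hne⟩
  · exfalso
    rw [run_fix Q] at hnext
    have := congrFun hnext q
    rw [Function.update_self] at this
    omega

lemma allMatched (p : Fin n) : ∃ w, (GSrun Q).wmatch w = some p := by
  by_contra hno
  push_neg at hno
  have hun : isUnmatched (GSrun Q) p = true := (isUnmatched_iff _ _).mpr hno
  have hn := run_no_active Q p hun
  have hwm : ∀ w : Fin n, ∃ h, (GSrun Q).wmatch w = some h := by
    intro w
    obtain ⟨h, hh, _⟩ := (inv_run Q).best p w (by rw [hn]; exact ((Q.M p).symm w).isLt)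
    exact ⟨h, hh⟩
  have hg : ∀ w, (GSrun Q).wmatch w = some (((GSrun Q).wmatch w).getD p) := by
    intro w
    obtain ⟨h, hh⟩ := hwm w
    rw [hh]
    rfl
  have ginj : Function.Injective (fun w => ((GSrun Q).wmatch w).getD p) := by
    intro w w' he
    have he' : ((GSrun Q).wmatch w).getD p = ((GSrun Q).wmatch w').getD p := he
    exact (inv_run Q).inj w w' _ (hg w) (by rw [hg w', he'])
  obtain ⟨w, hwp⟩ := Finite.injective_iff_surjective.mp ginj p
  have hwp' : ((GSrun Q).wmatch w).getD p = p := hwp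
  exact hno w (by rw [hg w, hwp'])

lemma DA_spec (p : Fin n) : (GSrun Q).wmatch (DA Q p) = some p := by
  have h := allMatched Q p
  unfold DA
  rw [dif_pos h]
  exact h.choose_spec

lemma DA_inj : Function.Injective (DA Q) := by
  intro p q h
  have h1 := DA_spec Q p
  rw [h, DA_spec Q q] at h1
  exact (Option.some.inj h1).symm

lemma wmatch_eq_DA {w p : Fin n} (h : (GSrun Q).wmatch w = some p) : DA Q p = w :=
  (inv_run Q).inj _ _ _ (DA_spec Q p) h


/-- the woman-side partner function of `DA P` -/
noncomputable def muw (P : Profile n) (m : Fin n) : Fin n → Fin n :=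
  fun w => ((GSrun P).wmatch w).getD m

lemma muw_spec (P : Profile n) (m w : Fin n) :
    (GSrun P).wmatch w = some (muw P m w) := by
  obtain ⟨p, hp⟩ := Finite.injective_iff_surjective.mp (DA_inj P) w
  have h := DA_spec P p
  rw [hp] at h
  rw [h]
  unfold muw
  rw [h]
  rfl

lemma DA_muw (P : Profile n) (m w : Fin n) : DA P (muw P m w) = w :=
  wmatch_eq_DA P (muw_spec P m w)

lemma muw_DA (P : Profile n) (m p : Fin n) : muw P m (DA P p) = p := by
  unfold muw
  rw [DA_spec P p]
  rfl

/-- no blocking pair for DA P, in the form we need -/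
lemma stab (P : Profile n) (m p w : Fin n)
    (hlt : ((P.M p).symm w : ℕ) < ((P.M p).symm (DA P p) : ℕ)) :
    ¬ P.wpref w p (muw P m w) := by
  intro hpref
  have h1 : ((P.M p).symm (DA P p) : ℕ) < (GSrun P).next p :=
    (inv_run P).mrank _ _ (DA_spec P p)
  obtain ⟨h, hh, hcomp⟩ := (inv_run P).best p w (lt_trans hlt h1)
  have hhw : h = muw P m w := by
    have h2 := muw_spec P m w
    rw [hh] at h2
    exact Option.some.inj h2
  rcases hcomp with rfl | hw2
  · have : DA P h = w := wmatch_eq_DA P hh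
    rw [this] at hlt
    omega
  · rw [hhw] at hw2
    exact absurd (lt_trans hpref hw2) (lt_irrefl _)

/-- KEY LEMMA: in the run for the push-up profile, the accomplice can never be
simultaneously unmatched and strictly past `DA P m` on his submitted list. -/
lemma main_counting (P : Profile n) (m : Fin n) (e' : Fin n ≃ Fin n)
    (s : GSState n)
    (hsinv : Inv (P.updateM m e') s)
    (hm : ∀ w, s.wmatch w ≠ some m)
    (hd : ((e'.symm (DA P m) : ℕ)) < s.next m) : False := by
  classical
  have hPM : (P.updateM m e').M m = e' := by
    unfold Profile.updateM
    exact Function.update_self m e' P.M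
  have hPMo : ∀ p, p ≠ m → (P.updateM m e').M p = P.M p := by
    intro p hp
    unfold Profile.updateM
    exact Function.update_of_ne hp e' P.M
  have hWp : ∀ w a b, (P.updateM m e').wpref w a b ↔ P.wpref w a b := by
    intro w a b
    exact Iff.rfl
  set D : Finset (Fin n) := Finset.univ.filter
      (fun p => (((P.updateM m e').M p).symm (DA P p) : ℕ) < s.next p ∧
        s.wmatch (DA P p) ≠ some p) with hD
  set E : Finset (Fin n) := Finset.univ.filter
      (fun w => ∃ h, s.wmatch w = some h ∧ P.wpref w h (muw P m w)) with hE
  have hmD : m ∈ D := by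
    rw [hD, Finset.mem_filter]
    refine ⟨Finset.mem_univ m, ?_, hm (DA P m)⟩
    rw [hPM]
    exact hd
  have card1 : D.card ≤ E.card := by
    apply Finset.card_le_card_of_injOn (DA P)
    · intro p hp
      rw [hD, Finset.mem_coe, Finset.mem_filter] at hp
      obtain ⟨-, hp2, hp3⟩ := hp
      obtain ⟨h, hh, hcomp⟩ := hsinv.best p (DA P p) hp2
      have hne : h ≠ p := fun he => hp3 (he ▸ hh)
      rcases hcomp with rfl | hpref
      · exact absurd rfl hne
      · rw [hE, Finset.mem_coe, Finset.mem_filter]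
        refine ⟨Finset.mem_univ _, h, hh, ?_⟩
        rw [muw_DA]
        exact hpref
    · exact fun a _ b _ h => DA_inj P h
  have card2 : E.card ≤ (D.erase m).card := by
    apply Finset.card_le_card_of_injOn (fun w => (s.wmatch w).getD m)
    · intro w hw
      rw [hE, Finset.mem_coe, Finset.mem_filter] at hw
      obtain ⟨-, h, hh, hpref⟩ := hw
      have hgd : (s.wmatch w).getD m = h := by rw [hh]; rfl
      beta_reduce; rw [Finset.mem_coe, hgd, Finset.mem_erase]
      have hhm : h ≠ m := fun he => hm w (he ▸ hh)
      have hDAne : DA P h ≠ w := by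
        intro he
        have : muw P m w = h := by rw [← he, muw_DA]
        rw [this] at hpref
        exact absurd hpref (lt_irrefl _)
      refine ⟨hhm, ?_⟩
      rw [hD, Finset.mem_filter]
      refine ⟨Finset.mem_univ _, ?_, ?_⟩
      · -- rank of DA P h in h's list < s.next h
        rw [hPMo h hhm]
        have hrank : ((P.M h).symm (DA P h) : ℕ) < ((P.M h).symm w : ℕ) := by
          by_contra hnot
          push_neg at hnot
          have hne2 : (P.M h).symm w ≠ (P.M h).symm (DA P h) :=
            fun he => hDAne ((P.M h).symm.injective he).symm
          have : ((P.M h).symm w : ℕ) < ((P.M h).symm (DA P h) : ℕ) := by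
            rcases lt_or_eq_of_le hnot with hlt | heq
            · exact hlt
            · exact absurd (Fin.ext heq) hne2
          exact stab P m h w this hpref
        have hmr : (((P.updateM m e').M h).symm w : ℕ) < s.next h := hsinv.mrank w h hh
        rw [hPMo h hhm] at hmr
        omega
      · intro hc
        exact hDAne (hsinv.inj _ _ _ hc hh)
    · intro w hw w' hw' he
      have hw1 : w ∈ E := Finset.mem_coe.mp hw
      have hw1' : w' ∈ E := Finset.mem_coe.mp hw'
      rw [hE, Finset.mem_filter] at hw1 hw1'
      obtain ⟨-, h, hh, -⟩ := hw1
      obtain ⟨-, h', hh', -⟩ := hw1'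
      have hgd : (s.wmatch w).getD m = h := by rw [hh]; rfl
      have hgd' : (s.wmatch w').getD m = h' := by rw [hh']; rfl
      have he' : (s.wmatch w).getD m = (s.wmatch w').getD m := he
      have : h = h' := by rw [← hgd, ← hgd']; exact he'
      exact hsinv.inj w w' h hh (this ▸ hh')
  rw [Finset.card_erase_of_mem hmD] at card2
  have hpos : 0 < D.card := Finset.card_pos.mpr ⟨m, hmD⟩
  omega

end GSDev

open GSDev

/-- If a push-up of the set `X` causes regret for man `m`, then
his new DA partner belongs to `X`. -/
theorem withRegret_pushUp_partner_in_X (n : ℕ) (P : Profile n) (m : Fin n)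
    (X : Set (Fin n)) (hX : X ⊆ Below (P.M m) (DA P m))
    (e' : Fin n ≃ Fin n) (hpu : PushUp P m X e')
    (hregret : P.mpref m (DA P m) (DA (P.updateM m e') m)) :
    DA (P.updateM m e') m ∈ X := by
  have hpu' : Above e' (DA P m) = Above (P.M m) (DA P m) ∪ X := by
    unfold PushUp PushUpDown at hpu
    rwa [Set.diff_empty] at hpu
  have hPM : (P.updateM m e').M m = e' := by
    unfold Profile.updateM
    exact Function.update_self m e' P.M
  have hnextle : ∀ k, ((GSstep (P.updateM m e'))^[k] (GSinit n)).next m ≤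
      (e'.symm (DA P m) : ℕ) + 1 := by
    intro k
    induction k with
    | zero => exact Nat.zero_le _
    | succ k ih =>
      rw [Function.iterate_succ_apply']
      rcases step_char (P.updateM m e') ((GSstep (P.updateM m e'))^[k] (GSinit n)) with
        ⟨_, heq⟩ | ⟨p, hlt, hun, hnext, -⟩
      · rw [heq]; exact ih
      · by_cases hp : p = m
        · subst hp
          rw [hnext, Function.update_self]
          rcases Nat.lt_or_ge (((GSstep (P.updateM p e'))^[k] (GSinit n)).next p)
              ((e'.symm (DA P p) : ℕ) + 1) with h | h
          · omega
          · exfalso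
            exact main_counting P p e' _ (inv_iter (P.updateM p e') k)
              ((isUnmatched_iff _ p).mp hun) (by omega)
        · rw [hnext, Function.update_of_ne (fun he => hp he.symm)]
          exact ih
  have hfin : (((P.updateM m e').M m).symm (DA (P.updateM m e') m) : ℕ) <
      (GSrun (P.updateM m e')).next m :=
    (inv_run (P.updateM m e')).mrank _ m (DA_spec (P.updateM m e') m)
  have hrunle : (GSrun (P.updateM m e')).next m ≤ (e'.symm (DA P m) : ℕ) + 1 :=
    hnextle (n * n + 1)
  rw [hPM] at hfin
  have hle : (e'.symm (DA (P.updateM m e') m) : ℕ) ≤ (e'.symm (DA P m) : ℕ) := by omega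
  have hne : DA (P.updateM m e') m ≠ DA P m := by
    intro he
    unfold Profile.mpref at hregret
    rw [he] at hregret
    exact absurd hregret (lt_irrefl _)
  have hltf : e'.symm (DA (P.updateM m e') m) < e'.symm (DA P m) := by
    rcases lt_or_eq_of_le hle with h | h
    · exact h
    · exact absurd (e'.symm.injective (Fin.ext h)) hne
  have hmem : DA (P.updateM m e') m ∈ Above e' (DA P m) := hltf
  rw [hpu'] at hmem
  rcases hmem with hab | hx
  · exfalso
    unfold Profile.mpref at hregret
    have : (P.M m).symm (DA (P.updateM m e') m) < (P.M m).symm (DA P m) := hab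
    exact absurd (lt_trans hregret this) (lt_irrefl _)
  · exact hx
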